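/- Let (r_j) be i.i.d. nonnegative integer-valued random variables with mean A and E[r₁⁴] < ∞, let i ≥ 0 be another random variable, and fix α > 3/4. Define ψ(x) = i + Σ_{j=1}^x r_j for x ∈ ℕ and B = sup_{x∈ℕ} |ψ(x) − A x| / (x^α + 1). Then there is a constant C_α depending only on α such that E[(log⁺ B)^{2+ε}] ≤ C_α (1 + E[(log⁺ i)^{2+ε}] + E[r₁⁴]) for any 0 < ε ≤ 2. -/

import Mathlib

open MeasureTheory ProbabilityTheory

-- (x+y)^p ≤ 16 (x^p + y^p) for 0 < p ≤ 4
lemma aux_rpow_add_le (x y p : ℝ) (hx : 0 ≤ x) (hy : 0 ≤ y) (hp : 0 < p) (hp4 : p ≤ 4) :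
    (x + y) ^ p ≤ 16 * (x ^ p + y ^ p) := by
  have hm : x + y ≤ 2 * max x y := by
    rcases max_cases x y with ⟨h1, h2⟩ | ⟨h1, h2⟩ <;> rw [h1] <;> linarith
  have h0 : (0:ℝ) ≤ max x y := le_max_of_le_left hx
  calc (x + y) ^ p ≤ (2 * max x y) ^ p :=
        Real.rpow_le_rpow (by linarith) hm hp.le
    _ = 2 ^ p * (max x y) ^ p := Real.mul_rpow (by norm_num) h0
    _ ≤ 16 * (x ^ p + y ^ p) := by
        have h2p : (2:ℝ) ^ p ≤ 2 ^ (4:ℝ) :=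
          Real.rpow_le_rpow_of_exponent_le (by norm_num) hp4
        have h16 : (2:ℝ) ^ (4:ℝ) = 16 := by
          rw [show (4:ℝ) = ((4:ℕ):ℝ) by norm_num, Real.rpow_natCast]; norm_num
        have hmp : (max x y) ^ p ≤ x ^ p + y ^ p := by
          rcases max_cases x y with ⟨h1, _⟩ | ⟨h1, _⟩ <;> rw [h1]
          · nlinarith [Real.rpow_nonneg hy p]
          · nlinarith [Real.rpow_nonneg hx p]
        have := Real.rpow_nonneg h0 p
        nlinarith

lemma aux_rpow_le_one_add (y p : ℝ) (hy : 0 ≤ y) (hp : 0 < p) (hp4 : p ≤ 4) :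
    y ^ p ≤ 1 + y ^ (4:ℝ) := by
  rcases le_or_gt y 1 with h | h
  · have := Real.rpow_le_one hy h hp.le
    have := Real.rpow_nonneg hy (4:ℝ)
    linarith
  · have h1 : y ^ p ≤ y ^ (4:ℝ) := Real.rpow_le_rpow_of_exponent_le h.le hp4
    linarith

lemma aux_log_le (y : ℝ) (hy : 1 ≤ y) : Real.log y ≤ 4 * y ^ ((1:ℝ)/4) := by
  have hy0 : (0:ℝ) < y := by linarith
  have h1 : Real.log (y ^ ((1:ℝ)/4)) ≤ y ^ ((1:ℝ)/4) - 1 :=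
    Real.log_le_sub_one_of_pos (Real.rpow_pos_of_pos hy0 _)
  rw [Real.log_rpow hy0] at h1
  nlinarith

lemma aux_log_pow4 (y : ℝ) (hy : 1 ≤ y) : (Real.log y) ^ (4:ℕ) ≤ 256 * y := by
  have hl0 : 0 ≤ Real.log y := Real.log_nonneg hy
  have h1 := aux_log_le y hy
  have h2 : (Real.log y) ^ (4:ℕ) ≤ (4 * y ^ ((1:ℝ)/4)) ^ (4:ℕ) := by
    apply pow_le_pow_left₀ hl0 h1
  have h3 : (y ^ ((1:ℝ)/4)) ^ (4:ℕ) = y := by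
    rw [← Real.rpow_natCast (y ^ ((1:ℝ)/4)) 4, ← Real.rpow_mul (by linarith)]
    norm_num
  calc (Real.log y) ^ (4:ℕ) ≤ (4 * y ^ ((1:ℝ)/4)) ^ (4:ℕ) := h2
    _ = 256 * y := by rw [mul_pow, h3]; norm_num

lemma aux_pointwise (B i G p : ℝ) (hB0 : 0 ≤ B) (hi : 0 ≤ i) (hG : 0 ≤ G)
    (hBle : B ≤ 1 + i + G) (hp : 0 < p) (hp4 : p ≤ 4) :
    (max (Real.log B) 0) ^ p ≤ 8464 + 256 * (max (Real.log i) 0) ^ p + 4096 * G := by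
  have hi1 : (0:ℝ) < 1 + i := by linarith
  have hG2 : (1:ℝ) ≤ 2 + G := by linarith
  have hlog1 : 0 ≤ Real.log (1 + i) := Real.log_nonneg (by linarith)
  have hlog2 : 0 ≤ Real.log (2 + G) := Real.log_nonneg hG2
  -- step 1 : log⁺ B ≤ log (1+i) + log (2+G)
  have step1 : max (Real.log B) 0 ≤ Real.log (1 + i) + Real.log (2 + G) := by
    rcases le_or_gt B 1 with h | h
    · have : Real.log B ≤ 0 := Real.log_nonpos hB0 h
      simp [max_le_iff]
      constructor <;> linarith
    · have hBpos : (0:ℝ) < B := by linarith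
      have : B ≤ (1 + i) * (2 + G) := by nlinarith
      have h2 : Real.log B ≤ Real.log ((1 + i) * (2 + G)) :=
        Real.log_le_log hBpos this
      rw [Real.log_mul (by linarith) (by linarith)] at h2
      exact max_le h2 (by linarith)
  -- step 2 : raise to power p
  have h1n : 0 ≤ max (Real.log B) 0 := le_max_right _ _
  have step2 : (max (Real.log B) 0) ^ p ≤
      16 * ((Real.log (1 + i)) ^ p + (Real.log (2 + G)) ^ p) := by
    calc (max (Real.log B) 0) ^ p ≤ (Real.log (1 + i) + Real.log (2 + G)) ^ p :=
          Real.rpow_le_rpow h1n step1 hp.le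
      _ ≤ 16 * ((Real.log (1 + i)) ^ p + (Real.log (2 + G)) ^ p) :=
          aux_rpow_add_le _ _ p hlog1 hlog2 hp hp4
  -- bound (log (1+i))^p
  have bnd1 : (Real.log (1 + i)) ^ p ≤ 16 * (1 + (max (Real.log i) 0) ^ p) := by
    have hle : Real.log (1 + i) ≤ Real.log 2 + max (Real.log i) 0 := by
      rcases le_or_gt i 1 with h | h
      · have : Real.log (1 + i) ≤ Real.log 2 := by
          apply Real.log_le_log hi1; linarith
        have := le_max_right (Real.log i) 0
        linarith
      · have h2 : Real.log (1 + i) ≤ Real.log (2 * i) := by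
          apply Real.log_le_log hi1; linarith
        rw [Real.log_mul (by norm_num) (by linarith)] at h2
        have : Real.log i ≤ max (Real.log i) 0 := le_max_left _ _
        linarith
    have hl2 : (0:ℝ) ≤ Real.log 2 := Real.log_nonneg (by norm_num)
    have hmax : (0:ℝ) ≤ max (Real.log i) 0 := le_max_right _ _
    calc (Real.log (1 + i)) ^ p ≤ (Real.log 2 + max (Real.log i) 0) ^ p :=
          Real.rpow_le_rpow hlog1 hle hp.le
      _ ≤ 16 * ((Real.log 2) ^ p + (max (Real.log i) 0) ^ p) :=
          aux_rpow_add_le _ _ p hl2 hmax hp hp4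
      _ ≤ 16 * (1 + (max (Real.log i) 0) ^ p) := by
          have : (Real.log 2) ^ p ≤ 1 :=
            Real.rpow_le_one hl2 (by
              have := Real.log_le_sub_one_of_pos (show (0:ℝ) < 2 by norm_num)
              linarith) hp.le
          linarith
  -- bound (log (2+G))^p
  have bnd2 : (Real.log (2 + G)) ^ p ≤ 513 + 256 * G := by
    have h1 : (Real.log (2 + G)) ^ p ≤ 1 + (Real.log (2 + G)) ^ (4:ℝ) :=
      aux_rpow_le_one_add _ p hlog2 hp hp4
    have h2 : (Real.log (2 + G)) ^ (4:ℝ) = (Real.log (2 + G)) ^ (4:ℕ) := by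
      rw [← Real.rpow_natCast (Real.log (2 + G)) 4]; norm_num
    have h3 := aux_log_pow4 (2 + G) hG2
    rw [h2] at h1
    linarith
  calc (max (Real.log B) 0) ^ p
      ≤ 16 * ((Real.log (1 + i)) ^ p + (Real.log (2 + G)) ^ p) := step2
    _ ≤ 16 * (16 * (1 + (max (Real.log i) 0) ^ p) + (513 + 256 * G)) := by linarith
    _ ≤ 8464 + 256 * (max (Real.log i) 0) ^ p + 4096 * G := by linarith

lemma aux_abs_le_one_add_pow4 (a : ℝ) : |a| ≤ 1 + a ^ 4 := by
  have h4 : a ^ 4 = |a| ^ 4 := by rw [← abs_pow]; rw [abs_of_nonneg (by positivity)]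
  rw [h4]
  have ht : (0:ℝ) ≤ |a| := abs_nonneg a
  rcases le_or_gt |a| 1 with h | h
  · nlinarith [pow_nonneg ht 4]
  · nlinarith [pow_le_pow_right₀ h.le (show 1 ≤ 4 by norm_num), pow_one |a|]

lemma aux_prod_dom (a b : ℝ) (j k : ℕ) (hjk : j + k ≤ 4) :
    |a ^ j * b ^ k| ≤ 1 + a ^ 4 + b ^ 4 := by
  have habs : |a ^ j * b ^ k| = |a| ^ j * |b| ^ k := by
    rw [abs_mul, abs_pow, abs_pow]
  set m := max |a| |b| with hm
  have ha : |a| ≤ m := le_max_left _ _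
  have hb : |b| ≤ m := le_max_right _ _
  have hm0 : (0:ℝ) ≤ m := le_trans (abs_nonneg a) ha
  have h1 : |a| ^ j * |b| ^ k ≤ m ^ j * m ^ k := by
    apply mul_le_mul (pow_le_pow_left₀ (abs_nonneg a) ha j)
      (pow_le_pow_left₀ (abs_nonneg b) hb k) (by positivity) (by positivity)
  have h2 : m ^ j * m ^ k = m ^ (j + k) := (pow_add m j k).symm
  have h3 : m ^ (j + k) ≤ 1 + m ^ 4 := by
    rcases le_or_gt m 1 with h | h
    · have : m ^ (j + k) ≤ 1 := pow_le_one₀ hm0 h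
      nlinarith [pow_nonneg hm0 4]
    · have : m ^ (j + k) ≤ m ^ 4 := pow_le_pow_right₀ h.le hjk
      nlinarith [pow_nonneg hm0 4]
  have h4 : m ^ 4 ≤ a ^ 4 + b ^ 4 := by
    have ha4 : a ^ 4 = |a| ^ 4 := by rw [← abs_pow, abs_of_nonneg (by positivity)]
    have hb4 : b ^ 4 = |b| ^ 4 := by rw [← abs_pow, abs_of_nonneg (by positivity)]
    rcases max_cases |a| |b| with ⟨hh, _⟩ | ⟨hh, _⟩ <;> rw [hm, hh]
    · rw [ha4]; nlinarith [pow_nonneg (abs_nonneg b) 4, hb4 ▸ pow_nonneg (abs_nonneg b) 4]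
    · rw [hb4]; nlinarith [pow_nonneg (abs_nonneg a) 4, ha4 ▸ pow_nonneg (abs_nonneg a) 4]
  calc |a ^ j * b ^ k| = |a| ^ j * |b| ^ k := habs
    _ ≤ m ^ (j + k) := h2 ▸ h1
    _ ≤ 1 + m ^ 4 := h3
    _ ≤ 1 + (a ^ 4 + b ^ 4) := by linarith
    _ = 1 + a ^ 4 + b ^ 4 := by ring

lemma fourth_moment_sum {Ω : Type} [MeasurableSpace Ω] (P : Measure Ω) [IsProbabilityMeasure P]
    (Y : ℕ → Ω → ℝ) (hmeas : ∀ n, Measurable (Y n))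
    (hindep : iIndepFun Y P)
    (hint4 : ∀ n, Integrable (fun ω => Y n ω ^ 4) P)
    (hmean : ∀ n, ∫ ω, Y n ω ∂P = 0)
    (σ2 μ4 : ℝ) (hσ0 : 0 ≤ σ2) (hσμ : σ2 ^ 2 ≤ μ4)
    (h2 : ∀ n, ∫ ω, Y n ω ^ 2 ∂P ≤ σ2)
    (h4 : ∀ n, ∫ ω, Y n ω ^ 4 ∂P ≤ μ4) :
    ∀ n, Integrable (fun ω => (∑ j ∈ Finset.range n, Y j ω) ^ 4) P ∧
      ∫ ω, (∑ j ∈ Finset.range n, Y j ω) ^ 4 ∂P ≤ 3 * n ^ 2 * μ4 := by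
  have hμ0 : 0 ≤ μ4 := le_trans (sq_nonneg σ2) hσμ
  -- integrability of Y n and Y n ^ k
  have hYint : ∀ n (k : ℕ), k ≤ 4 → Integrable (fun ω => Y n ω ^ k) P := by
    intro n k hk
    refine Integrable.mono' ((integrable_const 1).add ((integrable_const 1).add (hint4 n)))
      ((hmeas n).pow_const k).aestronglyMeasurable (Filter.Eventually.of_forall fun ω => ?_)
    have := aux_prod_dom (Y n ω) 1 k 0 (by omega)
    simp only [one_pow, mul_one, pow_zero] at this
    calc ‖Y n ω ^ k‖ = |Y n ω ^ k| := rfl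
      _ ≤ 1 + Y n ω ^ 4 + 1 := by simpa [abs_mul] using this
      _ = 1 + (1 + Y n ω ^ 4) := by ring
  -- the induction
  suffices H : ∀ n, (∀ k : ℕ, k ≤ 4 → Integrable (fun ω => (∑ j ∈ Finset.range n, Y j ω) ^ k) P)
      ∧ ∫ ω, ∑ j ∈ Finset.range n, Y j ω ∂P = 0
      ∧ ∫ ω, (∑ j ∈ Finset.range n, Y j ω) ^ 2 ∂P ≤ n * σ2
      ∧ ∫ ω, (∑ j ∈ Finset.range n, Y j ω) ^ 4 ∂P ≤ 3 * n ^ 2 * μ4 by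
    intro n; exact ⟨(H n).1 4 le_rfl, (H n).2.2.2⟩
  intro n
  induction n with
  | zero =>
    refine ⟨fun k hk => ?_, by simp, by simp, by simp [hμ0]⟩
    rcases Nat.eq_zero_or_pos k with rfl | hkpos
    · simpa using (integrable_const (1:ℝ))
    · simpa [zero_pow hkpos.ne'] using (integrable_const (0:ℝ))
  | succ n IH =>
    obtain ⟨IHint, IHm, IH2, IH4⟩ := IH
    set S : Ω → ℝ := fun ω => ∑ j ∈ Finset.range n, Y j ω with hS
    have hSmeas : Measurable S := Finset.measurable_sum _ fun j _ => hmeas j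
    -- independence of S and Y n
    have hSY : IndepFun S (Y n) P := by
      have h := hindep.indepFun_finset_sum_of_notMem hmeas
        (Finset.notMem_range_self (n := n))
      have heq : (∑ j ∈ Finset.range n, Y j) = S := by
        funext ω; simp [hS, Finset.sum_apply]
      rwa [heq] at h
    -- independence of powers
    have hSYpow : ∀ j k : ℕ, IndepFun (fun ω => S ω ^ j) (fun ω => Y n ω ^ k) P := by
      intro j k
      exact hSY.comp (measurable_id.pow_const j) (measurable_id.pow_const k)
    -- integrability of products S^j * Y^k, j + k ≤ 4
    have hprod : ∀ j k : ℕ, j + k ≤ 4 →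
        Integrable (fun ω => S ω ^ j * Y n ω ^ k) P := by
      intro j k hjk
      refine Integrable.mono'
        (((integrable_const 1).add (IHint 4 le_rfl)).add (hint4 n))
        (((hSmeas.pow_const j).mul ((hmeas n).pow_const k)).aestronglyMeasurable)
        (Filter.Eventually.of_forall fun ω => ?_)
      have := aux_prod_dom (S ω) (Y n ω) j k hjk
      calc ‖S ω ^ j * Y n ω ^ k‖ = |S ω ^ j * Y n ω ^ k| := rfl
        _ ≤ 1 + S ω ^ 4 + Y n ω ^ 4 := this
        _ = (1 + S ω ^ 4) + Y n ω ^ 4 := by ring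
    -- integrals of products factorize
    have hprodint : ∀ j k : ℕ,
        ∫ ω, S ω ^ j * Y n ω ^ k ∂P
          = (∫ ω, S ω ^ j ∂P) * ∫ ω, Y n ω ^ k ∂P := by
      intro j k
      exact (hSYpow j k).integral_fun_mul_eq_mul_integral
        ((hSmeas.pow_const j).aestronglyMeasurable)
        (((hmeas n).pow_const k).aestronglyMeasurable)
    have hSum : ∀ ω, ∑ j ∈ Finset.range (n+1), Y j ω = S ω + Y n ω := by
      intro ω; rw [Finset.sum_range_succ]
    -- integrability of all powers of the new sum
    have hnewint : ∀ k : ℕ, k ≤ 4 →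
        Integrable (fun ω => (∑ j ∈ Finset.range (n+1), Y j ω) ^ k) P := by
      intro k hk
      have hrw : (fun ω => (∑ j ∈ Finset.range (n+1), Y j ω) ^ k)
          = fun ω => ∑ m ∈ Finset.range (k+1), (k.choose m : ℝ) *
              (S ω ^ m * Y n ω ^ (k - m)) := by
        funext ω
        rw [hSum ω, add_pow]
        refine Finset.sum_congr rfl fun m hm => ?_
        ring
      rw [hrw]
      refine integrable_finset_sum _ fun m hm => ?_
      refine ((hprod m (k - m) ?_).const_mul _)
      have := Finset.mem_range.mp hm
      omega
    -- basic integrabilities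
    have hSpow : ∀ k : ℕ, k ≤ 4 → Integrable (fun ω => S ω ^ k) P := by
      intro k hk
      have := hprod k 0 (by omega)
      simpa using this
    have hSint1 : Integrable S P := by
      have := hSpow 1 (by norm_num); simpa using this
    have hYn1 : Integrable (Y n) P := by
      have := hYint n 1 (by norm_num); simpa using this
    have hIS1 : ∫ ω, S ω ^ 1 ∂P = 0 := by simpa using IHm
    have hIY1 : ∫ ω, Y n ω ^ 1 ∂P = 0 := by simpa using hmean n
    have hIS2 : ∫ ω, S ω ^ 2 ∂P ≤ n * σ2 := IH2
    have hIS4 : ∫ ω, S ω ^ 4 ∂P ≤ 3 * n ^ 2 * μ4 := IH4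
    have hIS2nn : 0 ≤ ∫ ω, S ω ^ 2 ∂P := integral_nonneg fun ω => by positivity
    have hIY2nn : 0 ≤ ∫ ω, Y n ω ^ 2 ∂P := integral_nonneg fun ω => by positivity
    refine ⟨hnewint, ?_, ?_, ?_⟩
    · -- mean zero
      have hfun : (fun ω => ∑ j ∈ Finset.range (n+1), Y j ω)
          = fun ω => S ω + Y n ω := funext hSum
      calc ∫ ω, ∑ j ∈ Finset.range (n+1), Y j ω ∂P
          = ∫ ω, S ω + Y n ω ∂P := by rw [hfun]
        _ = (∫ ω, S ω ∂P) + ∫ ω, Y n ω ∂P := integral_add hSint1 hYn1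
        _ = 0 := by rw [hmean n]; simpa using IHm
    · -- second moment
      have hfun : (fun ω => (∑ j ∈ Finset.range (n+1), Y j ω) ^ 2)
          = fun ω => S ω ^ 2 + (2 * (S ω ^ 1 * Y n ω ^ 1) + Y n ω ^ 2) := by
        funext ω; rw [hSum ω]; ring
      have e1 : ∫ ω, (∑ j ∈ Finset.range (n+1), Y j ω) ^ 2 ∂P
          = (∫ ω, S ω ^ 2 ∂P) + (2 * ((∫ ω, S ω ^ 1 ∂P) * ∫ ω, Y n ω ^ 1 ∂P)
              + ∫ ω, Y n ω ^ 2 ∂P) := by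
        have hb : Integrable (fun ω => 2 * (S ω ^ 1 * Y n ω ^ 1) + Y n ω ^ 2) P :=
          ((hprod 1 1 (by norm_num)).const_mul 2).add (hYint n 2 (by norm_num))
        rw [hfun, integral_add (hSpow 2 (by norm_num)) hb,
          integral_add ((hprod 1 1 (by norm_num)).const_mul 2) (hYint n 2 (by norm_num)),
          integral_const_mul, hprodint 1 1]
      rw [e1, hIS1]
      have := h2 n
      push_cast
      nlinarith
    · -- fourth moment
      have hfun : (fun ω => (∑ j ∈ Finset.range (n+1), Y j ω) ^ 4)
          = fun ω => S ω ^ 4 + (4 * (S ω ^ 3 * Y n ω ^ 1)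
              + (6 * (S ω ^ 2 * Y n ω ^ 2)
              + (4 * (S ω ^ 1 * Y n ω ^ 3) + Y n ω ^ 4))) := by
        funext ω; rw [hSum ω]; ring
      have i31 := (hprod 3 1 (by norm_num)).const_mul 4
      have i22 := (hprod 2 2 (by norm_num)).const_mul 6
      have i13 := (hprod 1 3 (by norm_num)).const_mul 4
      have i04 := hint4 n
      have e1 : ∫ ω, (∑ j ∈ Finset.range (n+1), Y j ω) ^ 4 ∂P
          = (∫ ω, S ω ^ 4 ∂P)
            + (4 * ((∫ ω, S ω ^ 3 ∂P) * ∫ ω, Y n ω ^ 1 ∂P)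
            + (6 * ((∫ ω, S ω ^ 2 ∂P) * ∫ ω, Y n ω ^ 2 ∂P)
            + (4 * ((∫ ω, S ω ^ 1 ∂P) * ∫ ω, Y n ω ^ 3 ∂P)
            + ∫ ω, Y n ω ^ 4 ∂P))) := by
        have ha3 : Integrable (fun ω => 4 * (S ω ^ 1 * Y n ω ^ 3) + Y n ω ^ 4) P :=
          i13.add i04
        have ha2 : Integrable (fun ω => 6 * (S ω ^ 2 * Y n ω ^ 2)
            + (4 * (S ω ^ 1 * Y n ω ^ 3) + Y n ω ^ 4)) P := i22.add ha3
        have ha1 : Integrable (fun ω => 4 * (S ω ^ 3 * Y n ω ^ 1)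
            + (6 * (S ω ^ 2 * Y n ω ^ 2) + (4 * (S ω ^ 1 * Y n ω ^ 3) + Y n ω ^ 4))) P :=
          i31.add ha2
        rw [hfun, integral_add (hSpow 4 (by norm_num)) ha1,
          integral_add i31 ha2,
          integral_add i22 ha3,
          integral_add i13 i04,
          integral_const_mul, integral_const_mul, integral_const_mul,
          hprodint 3 1, hprodint 2 2, hprodint 1 3]
      rw [e1, hIS1, hIY1]
      have hY2 := h2 n
      have hY4 := h4 n
      have hσsq : (∫ ω, S ω ^ 2 ∂P) * (∫ ω, Y n ω ^ 2 ∂P) ≤ (n * σ2) * σ2 :=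
        mul_le_mul hIS2 hY2 hIY2nn (by positivity)
      push_cast
      nlinarith [sq_nonneg σ2, Nat.cast_nonneg (α := ℝ) n]

theorem galton_watson_log_moment_bound (α : ℝ) (hα : 3 / 4 < α)
    (ε : ℝ) (hε0 : 0 < ε) (hε2 : ε ≤ 2) :
    ∃ Cα : ENNReal, Cα ≠ ⊤ ∧
      ∀ (Ω : Type) (_ : MeasurableSpace Ω) (P : Measure Ω), IsProbabilityMeasure P →
        ∀ (r : ℕ → Ω → ℕ), (∀ n, Measurable (r n)) →
          iIndepFun r P →
          (∀ n, Measure.map (r n) P = Measure.map (r 0) P) →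
          ∀ (A : ℝ), (∫ ω, (r 0 ω : ℝ) ∂P = A) →
            Integrable (fun ω => (r 0 ω : ℝ) ^ 4) P →
            ∀ (i : Ω → ℝ), Measurable i → (∀ ω, 0 ≤ i ω) →
              (∫⁻ ω, ENNReal.ofReal
                  ((max (Real.log (⨆ x : ℕ,
                      |(i ω + ∑ j ∈ Finset.range x, (r j ω : ℝ)) - A * x| / ((x : ℝ) ^ α + 1)))
                    0) ^ (2 + ε)) ∂P)
                ≤ Cα * (1 + (∫⁻ ω, ENNReal.ofReal ((max (Real.log (i ω)) 0) ^ (2 + ε)) ∂P)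
                          + ∫⁻ ω, ENNReal.ofReal ((r 0 ω : ℝ) ^ 4) ∂P) := by
  -- the convergent series depending only on α
  have h4α : (2:ℝ) - 4*α < -1 := by linarith
  have hsum : Summable (fun x : ℕ => (x:ℝ)^2 / ((x:ℝ)^α + 1)^4) := by
    have hle : ∀ x : ℕ, (x:ℝ)^2 / ((x:ℝ)^α + 1)^4 ≤ (x:ℝ) ^ ((2:ℝ) - 4*α) := by
      intro x
      rcases Nat.eq_zero_or_pos x with rfl | hx
      · rw [show ((0:ℕ):ℝ) = (0:ℝ) by norm_num, Real.zero_rpow (by linarith : (2:ℝ)-4*α ≠ 0)]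
        norm_num
      · have hx1 : (1:ℝ) ≤ (x:ℝ) := by exact_mod_cast hx
        have hx0 : (0:ℝ) < x := by linarith
        have hrp : (0:ℝ) < (x:ℝ)^α := Real.rpow_pos_of_pos hx0 α
        have h1 : ((x:ℝ)^α)^(4:ℕ) ≤ ((x:ℝ)^α + 1)^(4:ℕ) :=
          pow_le_pow_left₀ hrp.le (by linarith) 4
        have h2 : (x:ℝ)^2 / ((x:ℝ)^α + 1)^4 ≤ (x:ℝ)^2 / ((x:ℝ)^α)^4 := by
          gcongr
        have h3 : (x:ℝ)^2 / ((x:ℝ)^α)^(4:ℕ) = (x:ℝ)^((2:ℝ) - 4*α) := by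
          rw [← Real.rpow_natCast ((x:ℝ)^α) 4, ← Real.rpow_mul hx0.le,
            show ((x:ℝ))^(2:ℕ) = (x:ℝ)^((2:ℕ):ℝ) from (Real.rpow_natCast _ 2).symm,
            ← Real.rpow_sub hx0]
          norm_num [mul_comm]
        calc (x:ℝ)^2 / ((x:ℝ)^α + 1)^4 ≤ (x:ℝ)^2 / ((x:ℝ)^α)^4 := h2
          _ = (x:ℝ)^((2:ℝ) - 4*α) := h3
    exact Summable.of_nonneg_of_le (fun x => by positivity) hle
      ((Real.summable_nat_rpow).mpr h4α)
  set K : ℝ := ∑' x : ℕ, (x:ℝ)^2 / ((x:ℝ)^α + 1)^4 with hKdef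
  set C0 : ENNReal := ENNReal.ofReal 8464 with hC0
  set C1 : ENNReal := ENNReal.ofReal 256 with hC1
  set C3 : ENNReal := ENNReal.ofReal 4096 * (ENNReal.ofReal 48 * ENNReal.ofReal K) with hC3
  refine ⟨C0 + C1 + C3, ?_, ?_⟩
  · rw [hC0, hC1, hC3]
    exact ENNReal.add_ne_top.mpr ⟨ENNReal.add_ne_top.mpr ⟨ENNReal.ofReal_ne_top, ENNReal.ofReal_ne_top⟩,
      ENNReal.mul_ne_top ENNReal.ofReal_ne_top (ENNReal.mul_ne_top ENNReal.ofReal_ne_top ENNReal.ofReal_ne_top)⟩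
  intro Ω mΩ P hP r hrmeas hindep hmap A hA hr4 i himeas hinn
  haveI := hP
  have hcoe : Measurable (fun k : ℕ => (k:ℝ)) := measurable_from_top
  -- transfer of integrals and integrability by identical distribution
  have htrans : ∀ (φ : ℕ → ℝ) (n : ℕ), ∫ ω, φ (r n ω) ∂P = ∫ ω, φ (r 0 ω) ∂P := by
    intro φ n
    have hφ : Measurable φ := measurable_from_top
    rw [← integral_map (hrmeas n).aemeasurable hφ.aestronglyMeasurable, hmap n,
      integral_map (hrmeas 0).aemeasurable hφ.aestronglyMeasurable]
  have htransInt : ∀ (φ : ℕ → ℝ) (n : ℕ), Integrable (fun ω => φ (r 0 ω)) P →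
      Integrable (fun ω => φ (r n ω)) P := by
    intro φ n h
    have hφ : Measurable φ := measurable_from_top
    have h1 : Integrable φ (Measure.map (r 0) P) :=
      (integrable_map_measure hφ.aestronglyMeasurable (hrmeas 0).aemeasurable).mpr h
    have h2 : Integrable φ (Measure.map (r n) P) := by rw [hmap n]; exact h1
    exact (integrable_map_measure hφ.aestronglyMeasurable (hrmeas n).aemeasurable).mp h2
  -- basic integrabilities
  have hsq4 : ∀ a : ℝ, a^2 ≤ 1 + a^4 := fun a => by
    nlinarith [sq_nonneg (a^2-1), sq_nonneg a, sq_nonneg (a^2)]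
  have hsub : ∀ a b : ℝ, (a - b)^4 ≤ 8*a^4 + 8*b^4 := fun a b => by
    nlinarith [sq_nonneg (a+b), sq_nonneg (a-b), sq_nonneg (a^2-b^2), sq_nonneg (a^2+b^2),
      sq_nonneg (a*b)]
  have hr1 : Integrable (fun ω => (r 0 ω : ℝ)) P := by
    refine ((integrable_const (1:ℝ)).add hr4).mono'
      ((hcoe.comp (hrmeas 0)).aestronglyMeasurable) (Filter.Eventually.of_forall fun ω => ?_)
    have := aux_abs_le_one_add_pow4 ((r 0 ω : ℝ))
    simpa using this
  have hr2 : Integrable (fun ω => (r 0 ω : ℝ)^2) P := by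
    refine ((integrable_const (1:ℝ)).add hr4).mono'
      (((hcoe.comp (hrmeas 0)).pow_const 2).aestronglyMeasurable)
      (Filter.Eventually.of_forall fun ω => ?_)
    have h1 := hsq4 ((r 0 ω : ℝ))
    have h2 : ‖(r 0 ω : ℝ)^2‖ = (r 0 ω : ℝ)^2 := abs_of_nonneg (by positivity)
    rw [h2]; simpa using h1
  -- moment inequalities for A
  have hA0 : 0 ≤ A := hA ▸ integral_nonneg (fun ω => by positivity)
  have hr2nn : 0 ≤ ∫ ω, (r 0 ω : ℝ)^2 ∂P := integral_nonneg (fun ω => by positivity)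
  have hr4nn : 0 ≤ ∫ ω, (r 0 ω : ℝ)^4 ∂P := integral_nonneg (fun ω => by positivity)
  have hAsq : A^2 ≤ ∫ ω, (r 0 ω : ℝ)^2 ∂P := by
    have hm : MemLp (fun ω => (r 0 ω : ℝ)) 2 P :=
      (memLp_two_iff_integrable_sq ((hcoe.comp (hrmeas 0)).aestronglyMeasurable)).mpr hr2
    have h := variance_nonneg (fun ω => (r 0 ω : ℝ)) P
    rw [variance_eq_sub hm] at h
    simp only [Pi.pow_apply] at h
    rw [hA] at h
    linarith
  have h2sq : (∫ ω, (r 0 ω : ℝ)^2 ∂P)^2 ≤ ∫ ω, (r 0 ω : ℝ)^4 ∂P := by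
    have hint : Integrable (fun ω => ((r 0 ω : ℝ)^2)^2) P := by
      have : (fun ω => ((r 0 ω : ℝ)^2)^2) = fun ω => (r 0 ω : ℝ)^4 := funext fun ω => by ring
      rw [this]; exact hr4
    have hm : MemLp (fun ω => (r 0 ω : ℝ)^2) 2 P :=
      (memLp_two_iff_integrable_sq
        (((hcoe.comp (hrmeas 0)).pow_const 2).aestronglyMeasurable)).mpr hint
    have h := variance_nonneg (fun ω => (r 0 ω : ℝ)^2) P
    rw [variance_eq_sub hm] at h
    simp only [Pi.pow_apply] at h
    have heq : ∫ ω, ((r 0 ω : ℝ)^2)^2 ∂P = ∫ ω, (r 0 ω : ℝ)^4 ∂P := by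
      congr 1; funext ω; ring
    rw [heq] at h
    linarith
  have hA4 : A^4 ≤ ∫ ω, (r 0 ω : ℝ)^4 ∂P := by
    have h1 : A^2 * A^2 ≤ (∫ ω, (r 0 ω : ℝ)^2 ∂P) * (∫ ω, (r 0 ω : ℝ)^2 ∂P) :=
      mul_le_mul hAsq hAsq (sq_nonneg A) hr2nn
    nlinarith
  -- the centered variables
  set Y : ℕ → Ω → ℝ := fun n ω => (r n ω : ℝ) - A with hYdef
  have hYmeas : ∀ n, Measurable (Y n) := fun n => (hcoe.comp (hrmeas n)).sub measurable_const
  have hYindep : iIndepFun Y P :=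
    hindep.comp (fun _ (k:ℕ) => (k:ℝ) - A) (fun _ => measurable_from_top)
  have hr4n : ∀ n, Integrable (fun ω => (r n ω : ℝ)^4) P := fun n =>
    htransInt (fun k => (k:ℝ)^4) n hr4
  have hY4int : ∀ n, Integrable (fun ω => Y n ω^4) P := by
    intro n
    have h8 : Integrable (fun ω => 8*(r n ω : ℝ)^4 + 8*A^4) P :=
      ((hr4n n).const_mul 8).add (integrable_const _)
    refine h8.mono' ((hYmeas n).pow_const 4).aestronglyMeasurable
      (Filter.Eventually.of_forall fun ω => ?_)
    have h1 := hsub (r n ω : ℝ) A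
    have h2 : ‖Y n ω^4‖ = Y n ω^4 := abs_of_nonneg (by positivity)
    rw [h2]
    exact h1
  set μ4 : ℝ := ∫ ω, Y 0 ω^4 ∂P with hμdef
  set σ2 : ℝ := ∫ ω, Y 0 ω^2 ∂P with hσdef
  have hY4eq : ∀ n, ∫ ω, Y n ω^4 ∂P = μ4 := fun n => htrans (fun k => ((k:ℝ) - A)^4) n
  have hY2eq : ∀ n, ∫ ω, Y n ω^2 ∂P = σ2 := fun n => htrans (fun k => ((k:ℝ) - A)^2) n
  have hYmean : ∀ n, ∫ ω, Y n ω ∂P = 0 := by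
    intro n
    have hint : Integrable (fun ω => (r n ω : ℝ)) P := htransInt (fun k => (k:ℝ)) n hr1
    have h1 : ∫ ω, (r n ω : ℝ) ∂P = A := by rw [htrans (fun k => (k:ℝ)) n, hA]
    rw [hYdef]
    rw [integral_sub hint (integrable_const A), h1, integral_const]
    simp
  have hσ0 : 0 ≤ σ2 := integral_nonneg (fun ω => by positivity)
  have hσμ : σ2^2 ≤ μ4 := by
    have hint : Integrable (fun ω => (Y 0 ω^2)^2) P := by
      have : (fun ω => (Y 0 ω^2)^2) = fun ω => Y 0 ω^4 := funext fun ω => by ring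
      rw [this]; exact hY4int 0
    have hm : MemLp (fun ω => Y 0 ω^2) 2 P :=
      (memLp_two_iff_integrable_sq (((hYmeas 0).pow_const 2).aestronglyMeasurable)).mpr hint
    have h := variance_nonneg (fun ω => Y 0 ω^2) P
    rw [variance_eq_sub hm] at h
    simp only [Pi.pow_apply] at h
    have heq : ∫ ω, (Y 0 ω^2)^2 ∂P = μ4 := by
      rw [hμdef]; congr 1; funext ω; ring
    rw [heq] at h
    linarith
  have hμ16 : μ4 ≤ 16 * ∫ ω, (r 0 ω : ℝ)^4 ∂P := by
    have hb : Integrable (fun ω => 8*(r 0 ω : ℝ)^4 + 8*A^4) P :=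
      (hr4.const_mul 8).add (integrable_const _)
    have h1 : μ4 ≤ ∫ ω, (8*(r 0 ω : ℝ)^4 + 8*A^4) ∂P := by
      rw [hμdef]
      exact integral_mono (hY4int 0) hb (fun ω => hsub (r 0 ω : ℝ) A)
    rw [integral_add (hr4.const_mul 8) (integrable_const _), integral_const_mul,
      integral_const] at h1
    simp only [measure_univ, ENNReal.toReal_one, probReal_univ, smul_eq_mul, one_mul] at h1
    linarith
  -- the fourth moment bound for partial sums
  have E4 := fourth_moment_sum P Y hYmeas hYindep hY4int hYmean σ2 μ4 hσ0 hσμ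
    (fun n => (hY2eq n).le) (fun n => (hY4eq n).le)
  -- lintegral side
  set J : ℝ := ∫ ω, (r 0 ω : ℝ)^4 ∂P with hJdef
  have hJl : ENNReal.ofReal J = ∫⁻ ω, ENNReal.ofReal ((r 0 ω : ℝ)^4) ∂P :=
    ofReal_integral_eq_lintegral_ofReal hr4 (Filter.Eventually.of_forall fun ω => by positivity)
  set g : Ω → ENNReal := fun ω =>
    ∑' x : ℕ, ENNReal.ofReal ((∑ j ∈ Finset.range x, Y j ω)^4 / ((x:ℝ)^α + 1)^4) with hgdef
  have hgmeas : Measurable g :=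
    Measurable.ennreal_tsum fun x =>
      (((Finset.measurable_sum _ fun j _ => hYmeas j).pow_const 4).div_const _).ennreal_ofReal
  have hcx : ∀ x : ℕ, (1:ℝ) ≤ (x:ℝ)^α + 1 := fun x => by
    have := Real.rpow_nonneg (Nat.cast_nonneg x) α
    linarith
  have hgx : ∀ x : ℕ, ∫⁻ ω, ENNReal.ofReal ((∑ j ∈ Finset.range x, Y j ω)^4 / ((x:ℝ)^α + 1)^4) ∂P
      ≤ ENNReal.ofReal (48*J) * ENNReal.ofReal ((x:ℝ)^2 / ((x:ℝ)^α + 1)^4) := by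
    intro x
    have hc0 : (0:ℝ) < (x:ℝ)^α + 1 := lt_of_lt_of_le one_pos (hcx x)
    have hint := (E4 x).1.div_const (((x:ℝ)^α + 1)^4)
    rw [← ofReal_integral_eq_lintegral_ofReal hint
      (Filter.Eventually.of_forall fun ω => by positivity),
      ← ENNReal.ofReal_mul (by positivity)]
    apply ENNReal.ofReal_le_ofReal
    have h1 : ∫ ω, (∑ j ∈ Finset.range x, Y j ω)^4 / ((x:ℝ)^α + 1)^4 ∂P
        = (∫ ω, (∑ j ∈ Finset.range x, Y j ω)^4 ∂P) / ((x:ℝ)^α + 1)^4 := integral_div _ _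
    rw [h1]
    have h2 : (∫ ω, (∑ j ∈ Finset.range x, Y j ω)^4 ∂P) / ((x:ℝ)^α + 1)^4
        ≤ (3 * (x:ℕ)^2 * μ4) / ((x:ℝ)^α + 1)^4 := by
      gcongr
      exact (E4 x).2
    have h3 : (3 * ((x:ℕ):ℝ)^2 * μ4) / ((x:ℝ)^α + 1)^4
        ≤ (48*J) * ((x:ℝ)^2 / ((x:ℝ)^α + 1)^4) := by
      have hx2 : (0:ℝ) ≤ (x:ℝ)^2 := by positivity
      have hnum : 3 * ((x:ℕ):ℝ)^2 * μ4 ≤ 48 * (x:ℝ)^2 * J := by nlinarith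
      have heq : (48*J) * ((x:ℝ)^2 / ((x:ℝ)^α + 1)^4) = (48*(x:ℝ)^2*J) / ((x:ℝ)^α + 1)^4 := by
        ring
      rw [heq]
      gcongr
    exact le_trans h2 h3
  have hglint : ∫⁻ ω, g ω ∂P ≤ ENNReal.ofReal (48*J) * ENNReal.ofReal K := by
    have h1 : ∫⁻ ω, g ω ∂P = ∑' x : ℕ, ∫⁻ ω,
        ENNReal.ofReal ((∑ j ∈ Finset.range x, Y j ω)^4 / ((x:ℝ)^α + 1)^4) ∂P := by
      rw [hgdef]
      exact lintegral_tsum fun x =>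
        ((((Finset.measurable_sum _ fun j _ => hYmeas j).pow_const 4).div_const _).ennreal_ofReal).aemeasurable
    rw [h1]
    calc ∑' x : ℕ, ∫⁻ ω,
          ENNReal.ofReal ((∑ j ∈ Finset.range x, Y j ω)^4 / ((x:ℝ)^α + 1)^4) ∂P
        ≤ ∑' x : ℕ, ENNReal.ofReal (48*J) * ENNReal.ofReal ((x:ℝ)^2 / ((x:ℝ)^α + 1)^4) :=
          ENNReal.tsum_le_tsum hgx
      _ = ENNReal.ofReal (48*J) * ∑' x : ℕ, ENNReal.ofReal ((x:ℝ)^2 / ((x:ℝ)^α + 1)^4) :=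
          ENNReal.tsum_mul_left
      _ = ENNReal.ofReal (48*J) * ENNReal.ofReal K := by
          rw [hKdef, ENNReal.ofReal_tsum_of_nonneg (fun x => by positivity) hsum]
  have hgfin : ∀ᵐ ω ∂P, g ω < ⊤ :=
    ae_lt_top hgmeas (ne_top_of_le_ne_top
      (ENNReal.mul_ne_top ENNReal.ofReal_ne_top ENNReal.ofReal_ne_top) hglint)
  -- pointwise a.e. bound
  have hae : ∀ᵐ ω ∂P, ENNReal.ofReal
      ((max (Real.log (⨆ x : ℕ,
          |(i ω + ∑ j ∈ Finset.range x, (r j ω : ℝ)) - A * x| / ((x : ℝ) ^ α + 1)))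
        0) ^ (2 + ε))
      ≤ C0 + C1 * ENNReal.ofReal ((max (Real.log (i ω)) 0) ^ (2 + ε))
          + ENNReal.ofReal 4096 * g ω := by
    filter_upwards [hgfin] with ω hg
    set G : ℝ := (g ω).toReal with hGdef
    have hG0 : 0 ≤ G := ENNReal.toReal_nonneg
    have hterm : ∀ x : ℕ,
        |(i ω + ∑ j ∈ Finset.range x, (r j ω : ℝ)) - A * x| / ((x : ℝ) ^ α + 1)
          ≤ i ω + (1 + G) := by
      intro x
      have hc1 := hcx x
      have hc0 : (0:ℝ) < (x:ℝ)^α + 1 := lt_of_lt_of_le one_pos hc1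
      have hnum : (i ω + ∑ j ∈ Finset.range x, (r j ω : ℝ)) - A * x
          = i ω + ∑ j ∈ Finset.range x, Y j ω := by
        have hs : ∑ j ∈ Finset.range x, Y j ω
            = (∑ j ∈ Finset.range x, (r j ω : ℝ)) - A * x := by
          rw [hYdef]
          rw [Finset.sum_sub_distrib, Finset.sum_const, Finset.card_range, nsmul_eq_mul]
          ring
        rw [hs]; ring
      rw [hnum]
      set Sx : ℝ := ∑ j ∈ Finset.range x, Y j ω with hSxdef
      have h1 : |i ω + Sx| ≤ i ω + |Sx| := by
        calc |i ω + Sx| ≤ |i ω| + |Sx| := abs_add_le _ _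
          _ = i ω + |Sx| := by rw [abs_of_nonneg (hinn ω)]
      have h2 : |i ω + Sx| / ((x:ℝ)^α + 1) ≤ i ω + |Sx| / ((x:ℝ)^α + 1) := by
        have h2a : |i ω + Sx| / ((x:ℝ)^α + 1) ≤ (i ω + |Sx|) / ((x:ℝ)^α + 1) := by gcongr
        have h2b : (i ω + |Sx|) / ((x:ℝ)^α + 1)
            = i ω / ((x:ℝ)^α + 1) + |Sx| / ((x:ℝ)^α + 1) := add_div _ _ _
        have h2c : i ω / ((x:ℝ)^α + 1) ≤ i ω := div_le_self (hinn ω) hc1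
        rw [h2b] at h2a
        linarith
      have h3 : |Sx| / ((x:ℝ)^α + 1) ≤ 1 + G := by
        have t0 : 0 ≤ |Sx| / ((x:ℝ)^α + 1) := by positivity
        have h5 : ENNReal.ofReal (Sx^4 / ((x:ℝ)^α + 1)^4) ≤ g ω := by
          rw [hgdef]
          exact ENNReal.le_tsum x
        have h6 : (|Sx| / ((x:ℝ)^α + 1))^4 = Sx^4 / ((x:ℝ)^α + 1)^4 := by
          rw [div_pow]
          congr 1
          rw [← abs_pow, abs_of_nonneg (by positivity : (0:ℝ) ≤ Sx^4)]
        have h4 : (|Sx| / ((x:ℝ)^α + 1))^4 ≤ G := by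
          rw [h6, hGdef]
          exact (ENNReal.ofReal_le_iff_le_toReal hg.ne).mp h5
        have h7 := aux_abs_le_one_add_pow4 (|Sx| / ((x:ℝ)^α + 1))
        rw [abs_of_nonneg t0] at h7
        linarith
      linarith
    have hBle : (⨆ x : ℕ,
        |(i ω + ∑ j ∈ Finset.range x, (r j ω : ℝ)) - A * x| / ((x : ℝ) ^ α + 1))
          ≤ 1 + i ω + G :=
      Real.iSup_le (fun x => by have := hterm x; linarith) (by linarith [hinn ω, hG0])
    have hB0 : 0 ≤ ⨆ x : ℕ,
        |(i ω + ∑ j ∈ Finset.range x, (r j ω : ℝ)) - A * x| / ((x : ℝ) ^ α + 1) := by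
      refine Real.iSup_nonneg (fun x => ?_)
      have hc0 : (0:ℝ) < (x:ℝ)^α + 1 := lt_of_lt_of_le one_pos (hcx x)
      positivity
    have hmain := aux_pointwise _ (i ω) G (2 + ε) hB0 (hinn ω) hG0 hBle
      (by linarith) (by linarith)
    have hlognn : (0:ℝ) ≤ (max (Real.log (i ω)) 0) ^ (2 + ε) :=
      Real.rpow_nonneg (le_max_right _ _) _
    calc ENNReal.ofReal ((max (Real.log (⨆ x : ℕ,
          |(i ω + ∑ j ∈ Finset.range x, (r j ω : ℝ)) - A * x| / ((x : ℝ) ^ α + 1))) 0) ^ (2 + ε))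
        ≤ ENNReal.ofReal (8464 + 256 * (max (Real.log (i ω)) 0) ^ (2 + ε) + 4096 * G) :=
          ENNReal.ofReal_le_ofReal hmain
      _ = ENNReal.ofReal (8464 + 256 * (max (Real.log (i ω)) 0) ^ (2 + ε))
            + ENNReal.ofReal (4096 * G) := by
          rw [ENNReal.ofReal_add (by positivity) (by positivity)]
      _ = C0 + C1 * ENNReal.ofReal ((max (Real.log (i ω)) 0) ^ (2 + ε))
            + ENNReal.ofReal 4096 * ENNReal.ofReal G := by
          rw [ENNReal.ofReal_add (by norm_num) (by positivity),
            ENNReal.ofReal_mul (by norm_num), ENNReal.ofReal_mul (by norm_num), hC0, hC1]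
      _ = C0 + C1 * ENNReal.ofReal ((max (Real.log (i ω)) 0) ^ (2 + ε))
            + ENNReal.ofReal 4096 * g ω := by
          rw [hGdef, ENNReal.ofReal_toReal hg.ne]
  -- integrate the pointwise bound
  have hfimeas : Measurable (fun ω => ENNReal.ofReal ((max (Real.log (i ω)) 0) ^ (2 + ε))) := by
    have h1 : Measurable (fun ω => max (Real.log (i ω)) 0) :=
      (Real.measurable_log.comp himeas).max measurable_const
    exact (((Real.continuous_rpow_const (by linarith : (0:ℝ) ≤ 2 + ε)).measurable).comp h1).ennreal_ofReal
  set Ii : ENNReal := ∫⁻ ω, ENNReal.ofReal ((max (Real.log (i ω)) 0) ^ (2 + ε)) ∂P with hIi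
  calc ∫⁻ ω, ENNReal.ofReal ((max (Real.log (⨆ x : ℕ,
        |(i ω + ∑ j ∈ Finset.range x, (r j ω : ℝ)) - A * x| / ((x : ℝ) ^ α + 1))) 0) ^ (2 + ε)) ∂P
      ≤ ∫⁻ ω, (C0 + C1 * ENNReal.ofReal ((max (Real.log (i ω)) 0) ^ (2 + ε))
          + ENNReal.ofReal 4096 * g ω) ∂P := lintegral_mono_ae hae
    _ = C0 + C1 * Ii + ENNReal.ofReal 4096 * ∫⁻ ω, g ω ∂P := by
        rw [lintegral_add_right _ (hgmeas.const_mul _),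
          lintegral_add_right _ (hfimeas.const_mul _),
          lintegral_const, lintegral_const_mul _ hfimeas, lintegral_const_mul _ hgmeas]
        simp [measure_univ]
        rfl
    _ ≤ C0 + C1 * Ii + ENNReal.ofReal 4096 * (ENNReal.ofReal (48*J) * ENNReal.ofReal K) := by
        gcongr
    _ = C0 + C1 * Ii + C3 * (∫⁻ ω, ENNReal.ofReal ((r 0 ω : ℝ)^4) ∂P) := by
        rw [hC3, ENNReal.ofReal_mul (by norm_num), hJl]
        ring
    _ ≤ (C0 + C1 + C3) * (1 + Ii + ∫⁻ ω, ENNReal.ofReal ((r 0 ω : ℝ)^4) ∂P) := by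
        rw [mul_add, mul_add, mul_one]
        have hle1 : C0 ≤ C0 + C1 + C3 := by
          calc C0 ≤ C0 + C1 := le_self_add
            _ ≤ C0 + C1 + C3 := le_self_add
        have hle2 : C1 ≤ C0 + C1 + C3 := by
          calc C1 ≤ C0 + C1 := le_add_self
            _ ≤ C0 + C1 + C3 := le_self_add
        have hle3 : C3 ≤ C0 + C1 + C3 := le_add_self
        exact add_le_add (add_le_add hle1 (mul_le_mul_left hle2 _)) (mul_le_mul_left hle3 _)
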